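/- Let G be a metrizable topological group admitting a sequence (μ_n) of Borel probability measures that UEB-converges to invariance, such that for each n there is a compact set C_n ⊆ G with μ_n(C_n) = 1. Then G is separable. -/

import Mathlib

open Filter Topology MeasureTheory Pointwise
open scoped Uniformity

/-- The subgroup generated by a countable set is countable (as a set). -/
lemma countable_subgroup_closure_aux {G : Type*} [Group G] {c : Set G} (hc : c.Countable) :
    (Subgroup.closure c : Set G).Countable := by
  have hinv : (c⁻¹ : Set G).Countable := by
    simpa using hc.image (fun x => x⁻¹)
  have htc : (c ∪ c⁻¹).Countable := hc.union hinv
  haveI := htc.to_subtype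
  have hsub : (Subgroup.closure c : Set G) ⊆
      Set.range (fun l : List ↥(c ∪ c⁻¹) => (l.map Subtype.val).prod) := by
    intro x hx
    have hx' : x ∈ Submonoid.closure (c ∪ c⁻¹) := by
      rw [← Subgroup.closure_toSubmonoid]; exact hx
    obtain ⟨l, hl, hlp⟩ := Submonoid.exists_list_of_mem_closure hx'
    refine ⟨l.pmap (fun y hy => (⟨y, hy⟩ : ↥(c ∪ c⁻¹))) hl, ?_⟩
    simp only [List.map_pmap]
    rw [List.pmap_eq_map]
    simpa using hlp
  exact (Set.countable_range _).mono hsub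

/-- A `1`-bounded, `δ⁻¹`-Lipschitz function vanishing on `A` and equal to `1`
at points at distance at least `δ` from `A`. -/
lemma exists_sep_fun_aux {X : Type*} [PseudoMetricSpace X] (A : Set X) (hAne : A.Nonempty)
    (δ : ℝ) (hδ : 0 < δ) :
    ∃ f : X → ℝ, (∀ x, 0 ≤ f x ∧ f x ≤ 1) ∧ (∀ x y, |f x - f y| ≤ dist x y / δ) ∧
      (∀ x ∈ A, f x = 0) ∧ (∀ x, (∀ a ∈ A, δ ≤ dist a x) → f x = 1) := by
  have habs : ∀ c p q : ℝ, |min c p - min c q| ≤ |p - q| := by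
    have key : ∀ c p q : ℝ, min c p - min c q ≤ |p - q| := by
      intro c p q
      have hp : p ≤ q + |p - q| := by have := le_abs_self (p - q); linarith
      have hc : c ≤ c + |p - q| := by have := abs_nonneg (p - q); linarith
      have : min c p ≤ min c q + |p - q| := by
        calc min c p ≤ min (c + |p - q|) (q + |p - q|) := min_le_min hc hp
          _ = min c q + |p - q| := min_add_add_right c q |p - q|
      linarith
    intro c p q
    rw [abs_sub_le_iff]
    exact ⟨key c p q, by simpa [abs_sub_comm] using key c q p⟩
  refine ⟨fun x => min 1 (Metric.infDist x A / δ), fun x => ?_, fun x y => ?_, fun x hx => ?_,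
    fun x hx => ?_⟩
  · constructor
    · exact le_min zero_le_one (div_nonneg Metric.infDist_nonneg hδ.le)
    · exact min_le_left _ _
  · calc |min 1 (Metric.infDist x A / δ) - min 1 (Metric.infDist y A / δ)|
        ≤ |Metric.infDist x A / δ - Metric.infDist y A / δ| := habs _ _ _
      _ = |Metric.infDist x A - Metric.infDist y A| / δ := by
          rw [div_sub_div_same, abs_div, abs_of_pos hδ]
      _ ≤ dist x y / δ := by
          gcongr
          rw [abs_sub_le_iff]
          constructor
          · have h1 := Metric.infDist_le_infDist_add_dist (x := x) (y := y) (s := A)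
            linarith
          · have h2 := Metric.infDist_le_infDist_add_dist (x := y) (y := x) (s := A)
            have h3 : dist y x = dist x y := dist_comm y x
            linarith
  · simp [Metric.infDist_zero_of_mem hx, hδ.ne']
  · have hge : δ ≤ Metric.infDist x A := by
      by_contra hlt
      push_neg at hlt
      obtain ⟨a, haA, hda⟩ := (Metric.infDist_lt_iff hAne).1 hlt
      exact absurd (hx a haA) (by rw [dist_comm] at hda; exact not_le.2 hda)
    have : (1 : ℝ) ≤ Metric.infDist x A / δ := (le_div_iff₀ hδ).2 (by linarith)
    simp [min_eq_left this]

open Filter Topology MeasureTheory Pointwise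
open scoped Uniformity


/-- A net `(μ i)` of Borel probability measures on a topological group `G`
UEB-converges to invariance if, for every `g ∈ G` and every norm-bounded,
right-uniformly equicontinuous family `H` of bounded right-uniformly continuous
real-valued functions on `G`, `sup_{f ∈ H} |∫ f ∘ λ_g dμ_i − ∫ f dμ_i| → 0`. -/
def UEBConvergesToInvariance {G ι : Type*} [Group G] [TopologicalSpace G]
    [MeasurableSpace G] (l : Filter ι) (μ : ι → Measure G) : Prop :=
  ∀ (g : G) (H : Set (G → ℝ)),
    (∃ C : ℝ, ∀ f ∈ H, ∀ x, |f x| ≤ C) →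
    (∀ ε > 0, ∃ U ∈ 𝓝 (1 : G), ∀ f ∈ H, ∀ x y : G, y * x⁻¹ ∈ U → |f x - f y| ≤ ε) →
    ∀ ε > 0, ∀ᶠ i in l, ∀ f ∈ H,
      |∫ x, f (g * x) ∂(μ i) - ∫ x, f x ∂(μ i)| ≤ ε

/-- A metrizable topological group admitting a sequence of Borel probability measures
UEB-converging to invariance, each giving full measure to some compact set, is
separable. -/
theorem stmt9 {G : Type*} [Group G] [TopologicalSpace G] [IsTopologicalGroup G]
    [TopologicalSpace.MetrizableSpace G] [MeasurableSpace G] [BorelSpace G]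
    (μ : ℕ → Measure G) (hprob : ∀ n, IsProbabilityMeasure (μ n))
    (hUEB : UEBConvergesToInvariance atTop μ)
    (C : ℕ → Set G) (hcpt : ∀ n, IsCompact (C n)) (hC : ∀ n, μ n (C n) = 1) :
    TopologicalSpace.SeparableSpace G := by
  classical
  set S : Set G := ⋃ n, C n with hS
  set Γ : Subgroup G := (Subgroup.closure S).topologicalClosure with hΓdef
  have hCsub : ∀ n, C n ⊆ (Γ : Set G) := fun n x hx =>
    Subgroup.le_topologicalClosure _ (Subgroup.subset_closure (Set.mem_iUnion.2 ⟨n, hx⟩))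
  -- Main claim: every element of `G` lies in `Γ`.
  have key : ∀ g : G, g ∈ Γ := by
    by_contra hcon
    push_neg at hcon
    obtain ⟨g, hg⟩ := hcon
    set A : Set G := (Γ : Set G) with hA
    have hAne : A.Nonempty := ⟨1, Γ.one_mem⟩
    have hAclosed : IsClosed A := Subgroup.isClosed_topologicalClosure _
    have hgA : IsClosed ((fun a => g * a) '' A) := (Homeomorph.mulLeft g).isClosedMap _ hAclosed
    have h1gA : (1 : G) ∉ (fun a => g * a) '' A := by
      rintro ⟨a, haA, ha⟩
      have hga : g = a⁻¹ := eq_inv_of_mul_eq_one_left ha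
      exact hg (hga ▸ Γ.inv_mem haA)
    obtain ⟨U₀, hU₀nhds, hU₀⟩ : ∃ U₀ ∈ 𝓝 (1 : G), ∀ a ∈ A, g * a ∉ U₀ :=
      ⟨((fun a => g * a) '' A)ᶜ, hgA.isOpen_compl.mem_nhds h1gA,
        fun a haA hmem => hmem ⟨a, haA, rfl⟩⟩
    -- metrize the right uniformity
    letI u : UniformSpace G := IsTopologicalGroup.rightUniformSpace G
    have hucomap : (𝓤 G) = comap (fun p : G × G => p.2 / p.1) (𝓝 (1 : G)) := by
        simp_rw [div_eq_mul_inv]; rfl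
    haveI : (𝓤 G).IsCountablyGenerated := by
      rw [hucomap]; exact Filter.comap.isCountablyGenerated _ _
    obtain ⟨I, hI⟩ := UniformSpace.metrizable_uniformity G
    have hbasis : (𝓤 G).HasBasis (fun ε : ℝ => 0 < ε)
        (fun ε => { p : G × G | @dist G I.toDist p.1 p.2 < ε }) := by
      have h := @Metric.uniformity_basis_dist G I
      rwa [hI] at h
    have hE₀ : { p : G × G | p.2 / p.1 ∈ U₀ } ∈ 𝓤 G := by
      rw [hucomap]; exact preimage_mem_comap hU₀nhds
    obtain ⟨δ, hδpos, hδ⟩ := hbasis.mem_iff.1 hE₀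
    obtain ⟨f, hf01, hflip, hf0, hf1⟩ := @exists_sep_fun_aux G I A hAne δ hδpos
    -- the singleton family {f} is UEB
    have hbound : ∃ Cb : ℝ, ∀ f' ∈ ({f} : Set (G → ℝ)), ∀ x, |f' x| ≤ Cb := by
      refine ⟨1, ?_⟩
      rintro f' hf' x
      rw [Set.mem_singleton_iff] at hf'
      subst hf'
      exact abs_le.2 ⟨by linarith [(hf01 x).1], (hf01 x).2⟩
    have hmod : ∀ ε > 0, ∃ U ∈ 𝓝 (1 : G), ∀ f' ∈ ({f} : Set (G → ℝ)),
        ∀ x y : G, y * x⁻¹ ∈ U → |f' x - f' y| ≤ ε := by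
      intro ε hε
      have hmem : { p : G × G | @dist G I.toDist p.1 p.2 < δ * ε } ∈ 𝓤 G :=
        hbasis.mem_of_mem (by positivity)
      rw [hucomap, mem_comap] at hmem
      obtain ⟨T, hTnhds, hT⟩ := hmem
      refine ⟨T, hTnhds, ?_⟩
      rintro f' hf' x y hxy
      rw [Set.mem_singleton_iff] at hf'
      subst hf'
      have hxy' : ((x, y) : G × G) ∈ (fun p : G × G => p.2 / p.1) ⁻¹' T := by
        simpa [div_eq_mul_inv] using hxy
      have hdist : @dist G I.toDist x y < δ * ε := hT hxy'
      calc |f' x - f' y| ≤ @dist G I.toDist x y / δ := hflip x y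
        _ ≤ δ * ε / δ := by gcongr
        _ = ε := by field_simp
    have hev := hUEB g {f} hbound hmod (1 / 2) (by norm_num)
    obtain ⟨n, hn⟩ := hev.exists
    have hn' := hn f rfl
    haveI := hprob n
    have hmeasC : MeasurableSet (C n) := (hcpt n).isClosed.measurableSet
    have hnull : μ n (C n)ᶜ = 0 := by
      rw [prob_compl_eq_zero_iff hmeasC]; exact hC n
    -- the function vanishes a.e.
    have h0 : ∀ᵐ x ∂ μ n, f x = (0 : ℝ) := by
      rw [MeasureTheory.ae_iff]
      refine measure_mono_null (fun x hx => ?_) hnull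
      intro hxC
      exact hx (hf0 x (hCsub n hxC))
    -- the translate is a.e. equal to 1
    have h1 : ∀ᵐ x ∂ μ n, f (g * x) = (1 : ℝ) := by
      rw [MeasureTheory.ae_iff]
      refine measure_mono_null (fun x hx => ?_) hnull
      intro hxC
      refine hx (hf1 (g * x) ?_)
      intro a haA
      by_contra hlt
      push_neg at hlt
      have hpair : ((a, g * x) : G × G) ∈ { p : G × G | p.2 / p.1 ∈ U₀ } := hδ hlt
      have : g * x * a⁻¹ ∈ U₀ := by simpa [div_eq_mul_inv] using hpair
      have hxa : x * a⁻¹ ∈ A := Γ.mul_mem (hCsub n hxC) (Γ.inv_mem haA)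
      exact hU₀ (x * a⁻¹) hxa (by rwa [← mul_assoc])
    have hi0 : ∫ x, f x ∂ μ n = 0 := by
      rw [integral_congr_ae h0, integral_zero]
    have hi1 : ∫ x, f (g * x) ∂ μ n = 1 := by
      rw [integral_congr_ae h1]
      simp
    rw [hi0, hi1] at hn'
    norm_num at hn'
  -- conclude separability
  have hSsep : TopologicalSpace.IsSeparable S := by
    letI : MetricSpace G := TopologicalSpace.metrizableSpaceMetric G
    exact TopologicalSpace.IsSeparable.iUnion (fun n => (hcpt n).isSeparable)
  obtain ⟨c, hcc, hSc⟩ := hSsep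
  have hKc : ((Subgroup.closure c : Subgroup G) : Set G).Countable :=
    countable_subgroup_closure_aux hcc
  have hdense : Dense ((Subgroup.closure c : Subgroup G) : Set G) := by
    intro x
    have hle : Γ ≤ (Subgroup.closure c).topologicalClosure := by
      rw [hΓdef]
      apply Subgroup.topologicalClosure_minimal
      · rw [Subgroup.closure_le]
        refine hSc.trans ?_
        rw [Subgroup.topologicalClosure_coe]
        exact closure_mono Subgroup.subset_closure
      · exact Subgroup.isClosed_topologicalClosure _
    exact hle (key x)
  exact ⟨⟨((Subgroup.closure c : Subgroup G) : Set G), hKc, hdense⟩⟩
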